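/- arXiv:1811.00456 — 2 statements merged into one kernel-verified Lean document; each statement's English description precedes it below -/
import Mathlib

section
/- If 2 ≤ k ≤ N, then in the free associative ℂ-algebra ℂ⟨x_1,…,x_N⟩ the elementary symmetric polynomial e_k = ∑_{1 ≤ i(1) < i(2) < ⋯ < i(k) ≤ N} x_{i(1)} x_{i(2)} ⋯ x_{i(k)} does not belong to the subalgebra generated by the power sum symmetric polynomials {p_j : j ≥ 1}. -/
open scoped BigOperators

/-- The power sum symmetric polynomial `p_j = ∑_{i=1}^N x_i^j` in the free
associative `ℂ`-algebra on `N` noncommuting generators. -/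
noncomputable def powerSum (N : ℕ) (j : ℕ) : FreeAlgebra ℂ (Fin N) :=
  ∑ i : Fin N, FreeAlgebra.ι ℂ i ^ j

/-- The elementary symmetric polynomial
`e_k = ∑_{1 ≤ i(1) < … < i(k) ≤ N} x_{i(1)} ⋯ x_{i(k)}` in `ℂ⟨x_1,…,x_N⟩`. -/
noncomputable def elemSym (N k : ℕ) : FreeAlgebra ℂ (Fin N) :=
  ∑ i ∈ Finset.univ.filter (fun i : Fin k → Fin N => ∀ a b : Fin k, a < b → i a < i b),
    (List.ofFn fun j : Fin k => FreeAlgebra.ι ℂ (i j)).prod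

lemma freeMonoid_prod_ofFn (k N : ℕ) (c : Fin k → Fin N) :
    ((List.ofFn fun j => FreeMonoid.of (c j)).prod : FreeMonoid (Fin N))
      = FreeMonoid.ofList (List.ofFn c) := by
  induction k with
  | zero => simp
  | succ n ih => simp [List.ofFn_succ, FreeMonoid.ofList_cons, ih]

lemma equiv_word (k N : ℕ) (c : Fin k → Fin N) :
    FreeAlgebra.equivMonoidAlgebraFreeMonoid
        ((List.ofFn fun j => FreeAlgebra.ι ℂ (c j)).prod) =
      MonoidAlgebra.single (FreeMonoid.ofList (List.ofFn c)) 1 := by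
  rw [map_list_prod, List.map_ofFn]
  have h : ∀ (l : List (FreeMonoid (Fin N))),
      (l.map fun w => (MonoidAlgebra.single w (1:ℂ))).prod = MonoidAlgebra.single l.prod 1 := by
    intro l
    induction l with
    | nil => simp [MonoidAlgebra.one_def]
    | cons a t ih => simp [ih, MonoidAlgebra.single_mul_single]
  have h2 := h (List.ofFn fun j => FreeMonoid.of (c j))
  rw [List.map_ofFn] at h2
  rw [freeMonoid_prod_ofFn] at h2
  rw [← h2]
  have h3 : (⇑(FreeAlgebra.equivMonoidAlgebraFreeMonoid (R := ℂ) (X := Fin N)) ∘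
      fun j : Fin k => FreeAlgebra.ι ℂ (c j))
      = ((fun w => MonoidAlgebra.single w (1:ℂ)) ∘ fun j => FreeMonoid.of (c j)) := by
    funext j
    simp [Function.comp, FreeAlgebra.equivMonoidAlgebraFreeMonoid]
  rw [h3]

/-- Coefficient of the word `ofList (List.ofFn i0)` in a sum of words indexed by `T`. -/
lemma coeff_sum_words (k N : ℕ) (T : Finset (Fin k → Fin N)) (c : (Fin k → Fin N) → Fin k → Fin N)
    (i0 : Fin k → Fin N) :
    (FreeAlgebra.equivMonoidAlgebraFreeMonoid
        (∑ i ∈ T, (List.ofFn fun j => FreeAlgebra.ι ℂ (c i j)).prod)).coeff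
      (FreeMonoid.ofList (List.ofFn i0))
      = ∑ i ∈ T, (if c i = i0 then (1:ℂ) else 0) := by
  classical
  rw [map_sum, MonoidAlgebra.coeff_sum]
  rw [Finsupp.finset_sum_apply]
  refine Finset.sum_congr rfl fun i _ => ?_
  rw [equiv_word]
  rw [MonoidAlgebra.coeff_single, Finsupp.single_apply]
  congr 1
  simp only [eq_iff_iff]
  constructor
  · intro h
    have := congrArg FreeMonoid.toList h
    simp only [FreeMonoid.toList_ofList] at this
    exact funext fun j => List.ofFn_inj.mp this ▸ rfl
  · intro h; rw [h]

/-- For `2 ≤ k ≤ N`, the elementary symmetric polynomial `e_k` does not lie in the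
subalgebra of `ℂ⟨x_1,…,x_N⟩` generated by the power sums `{p_j : j ≥ 1}`. -/
theorem stmt2 (N k : ℕ) (hk : 2 ≤ k) (hkN : k ≤ N) :
    elemSym N k ∉
      Algebra.adjoin ℂ {y : FreeAlgebra ℂ (Fin N) | ∃ j : ℕ, 1 ≤ j ∧ y = powerSum N j} := by
  intro hmem
  have hN2 : 2 ≤ N := hk.trans hkN
  set a0 : Fin N := ⟨0, by omega⟩ with ha0
  set a1 : Fin N := ⟨1, by omega⟩ with ha1
  set τ : Fin N ≃ Fin N := Equiv.swap a0 a1 with hτ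
  set f : FreeAlgebra ℂ (Fin N) →ₐ[ℂ] FreeAlgebra ℂ (Fin N) :=
    FreeAlgebra.lift ℂ (fun i => FreeAlgebra.ι ℂ (τ i)) with hfdef
  have hf_ι : ∀ i, f (FreeAlgebra.ι ℂ i) = FreeAlgebra.ι ℂ (τ i) := fun i => by
    simp [hfdef]
  have hf_ps : ∀ j, f (powerSum N j) = powerSum N j := by
    intro j
    unfold powerSum
    rw [map_sum]
    simp only [map_pow, hf_ι]
    exact Equiv.sum_comp τ (fun i => FreeAlgebra.ι ℂ i ^ j)
  have hfix : f (elemSym N k) = elemSym N k := by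
    have hle : Algebra.adjoin ℂ {y : FreeAlgebra ℂ (Fin N) | ∃ j : ℕ, 1 ≤ j ∧ y = powerSum N j}
        ≤ AlgHom.equalizer f (AlgHom.id ℂ _) := by
      apply Algebra.adjoin_le
      rintro y ⟨j, _, rfl⟩
      exact hf_ps j
    exact hle hmem
  -- the increasing-tuple index set and canonical tuple
  set T : Finset (Fin k → Fin N) :=
    Finset.univ.filter (fun i : Fin k → Fin N => ∀ a b : Fin k, a < b → i a < i b) with hT
  set i0 : Fin k → Fin N := fun j => Fin.castLE hkN j with hi0
  have hi0T : i0 ∈ T := by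
    simp only [hT, Finset.mem_filter, Finset.mem_univ, true_and]
    intro a b hab
    exact hab
  -- coefficient of elemSym at w0 is 1
  have hc1 : (FreeAlgebra.equivMonoidAlgebraFreeMonoid (elemSym N k)).coeff
      (FreeMonoid.ofList (List.ofFn i0)) = 1 := by
    unfold elemSym
    rw [coeff_sum_words k N T (fun i => i) i0]
    rw [Finset.sum_ite_eq' T i0 (fun _ => (1:ℂ))]
    simp [hi0T]
  -- f (elemSym N k) as a sum of words with tuples τ ∘ i
  have hfe : f (elemSym N k)
      = ∑ i ∈ T, (List.ofFn fun j : Fin k => FreeAlgebra.ι ℂ (τ (i j))).prod := by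
    unfold elemSym
    rw [map_sum]
    refine Finset.sum_congr rfl fun i _ => ?_
    rw [map_list_prod, List.map_ofFn]
    have h3 : (⇑f ∘ fun j : Fin k => FreeAlgebra.ι ℂ (i j))
        = fun j => FreeAlgebra.ι ℂ (τ (i j)) := by
      funext j
      exact hf_ι (i j)
    rw [h3]
  -- coefficient of f (elemSym N k) at w0 is 0
  have hc0 : (FreeAlgebra.equivMonoidAlgebraFreeMonoid (f (elemSym N k))).coeff
      (FreeMonoid.ofList (List.ofFn i0)) = 0 := by
    rw [hfe, coeff_sum_words k N T (fun i => fun j => τ (i j)) i0]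
    apply Finset.sum_eq_zero
    intro i hiT
    rw [if_neg]
    intro hcontra
    -- then i = τ ∘ i0, which is not increasing
    have hi : i = fun j => τ (i0 j) := by
      funext j
      have := congrFun hcontra j
      have h2 := congrArg τ this
      rwa [Equiv.swap_apply_self] at h2
    have hmono : ∀ x y : Fin k, x < y → i x < i y := by
      simp only [hT, Finset.mem_filter] at hiT
      exact hiT.2
    have hb0 : (⟨0, by omega⟩ : Fin k) < (⟨1, by omega⟩ : Fin k) := by
      simp [Fin.lt_def]
    have := hmono ⟨0, by omega⟩ ⟨1, by omega⟩ hb0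
    rw [hi] at this
    have e1 : i0 (⟨0, by omega⟩ : Fin k) = a0 := rfl
    have e2 : i0 (⟨1, by omega⟩ : Fin k) = a1 := rfl
    simp only [e1, e2, hτ] at this
    rw [Equiv.swap_apply_left, Equiv.swap_apply_right] at this
    simp [ha0, ha1, Fin.lt_def] at this
  rw [hfix] at hc0
  rw [hc1] at hc0
  exact one_ne_zero hc0
end

section
/- Let R be a (not necessarily commutative) ring, x_1,…,x_N ∈ R, and let u = (u_1,…,u_r) be a nonempty finite sequence of positive integers. Then the ordered product p_{u_1} p_{u_2} ⋯ p_{u_r} equals ∑_{c} P_{u·c}, where the sum ranges over all compositions c of r. -/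
open scoped BigOperators

/-- The power sum `p_k = ∑_{i=1}^N x_i^k` of elements `x_1, …, x_N` of a ring. -/
def pSum {R : Type*} [Ring R] {N : ℕ} (x : Fin N → R) (k : ℕ) : R :=
  ∑ i : Fin N, x i ^ k

/-- For a finite sequence `v = (v_1, …, v_s)` of exponents,
`P_v = ∑ x_{i(1)}^{v_1} ⋯ x_{i(s)}^{v_s}`, the sum over all `i : Fin s → Fin N`
with neighboring indices distinct. -/
def PPoly {R : Type*} [Ring R] {N : ℕ} (x : Fin N → R) {s : ℕ} (v : Fin s → ℕ) : R :=
  ∑ i ∈ Finset.univ.filter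
      (fun i : Fin s → Fin N => ∀ j k : Fin s, (k : ℕ) = (j : ℕ) + 1 → i j ≠ i k),
    (List.ofFn fun j : Fin s => x (i j) ^ v j).prod

/-- For a composition `c` of `r`, the sequence `u·c` of length `c.length` whose `j`-th
entry is the sum of the entries of `u` over the `j`-th consecutive block of `c`. -/
def blockSum {r : ℕ} (u : Fin r → ℕ) (c : Composition r) : Fin c.length → ℕ :=
  fun j => ∑ t : Fin (c.blocksFun j), u (c.embedding j t)

namespace Stmt5Aux

variable {R : Type*} [Ring R] {N : ℕ}

/-- Sum over adjacent-distinct index sequences, first index forbidden to be `a`. -/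
def Qf (x : Fin N → R) : Option (Fin N) → List ℕ → R
  | _, [] => 1
  | a, k :: v => ∑ i ∈ Finset.univ.filter (fun i : Fin N => some i ≠ a),
      x i ^ k * Qf x (some i) v

/-- Like `Qf` but first index *forced* to be `i`; zero on the empty list. -/
def Qh (x : Fin N → R) (i : Fin N) : List ℕ → R
  | [] => 0
  | s :: rest => x i ^ s * Qf x (some i) rest

/-- Sums of the blocks of `v` split along the blocks of `c`. -/
def Sc {n : ℕ} (v : List ℕ) (c : Composition n) : List ℕ :=
  (v.splitWrtComposition c).map List.sum

def Vf (x : Fin N → R) (a : Option (Fin N)) (n : ℕ) (v : List ℕ) : R :=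
  ∑ c : Composition n, Qf x a (Sc v c)

def Mf (x : Fin N → R) (i : Fin N) (n : ℕ) (v : List ℕ) : R :=
  ∑ c : Composition n, Qh x i (Sc v c)

/-- Prepend a block of size 1. -/
def cons1 {n : ℕ} (c : Composition n) : Composition (n + 1) :=
  ⟨1 :: c.blocks, by
    intro i hi
    rcases List.mem_cons.1 hi with h | h
    · omega
    · exact c.blocks_pos h, by simp [c.blocks_sum, Nat.add_comm]⟩

/-- Increment the first block. -/
def inc {n : ℕ} (c : Composition n) (h : c.blocks ≠ []) : Composition (n + 1) :=
  ⟨(c.blocks.head h + 1) :: c.blocks.tail, by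
    intro i hi
    rcases List.mem_cons.1 hi with h' | h'
    · omega
    · exact c.blocks_pos (List.mem_of_mem_tail h'), by
    have := c.blocks_sum
    conv at this => rw [← List.cons_head_tail h]
    simp only [List.sum_cons] at this ⊢
    omega⟩

lemma blocks_ne_nil_of_inc {n : ℕ} (c : Composition n) (h : c.blocks ≠ []) :
    (inc c h).blocks ≠ [] := by simp [inc]

lemma blocks_ne_nil {n : ℕ} (c : Composition (n + 1)) : c.blocks ≠ [] := by
  intro h
  have := c.blocks_sum
  rw [h] at this
  simp at this

/-- The tail composition, for `n+1`. -/
def tl {n : ℕ} (c : Composition (n + 1)) (h1 : c.blocks.head (blocks_ne_nil c) = 1) :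
    Composition n :=
  ⟨c.blocks.tail, fun hi => c.blocks_pos (List.mem_of_mem_tail hi), by
    have := c.blocks_sum
    conv at this => rw [← List.cons_head_tail (blocks_ne_nil c)]
    simp only [List.sum_cons, h1] at this
    omega⟩

/-- The decrement-first-block composition, for `n+1`. -/
def dec {n : ℕ} (c : Composition (n + 1)) (h1 : ¬ c.blocks.head (blocks_ne_nil c) = 1) :
    Composition n :=
  ⟨(c.blocks.head (blocks_ne_nil c) - 1) :: c.blocks.tail, by
    intro i hi
    rcases List.mem_cons.1 hi with h' | h'
    · have := c.blocks_pos (List.head_mem (blocks_ne_nil c))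
      omega
    · exact c.blocks_pos (List.mem_of_mem_tail h'), by
    have := c.blocks_sum
    conv at this => rw [← List.cons_head_tail (blocks_ne_nil c)]
    simp only [List.sum_cons] at this ⊢
    have := c.blocks_pos (List.head_mem (blocks_ne_nil c))
    omega⟩

def compEquiv (n : ℕ) :
    Composition n ⊕ {c : Composition n // c.blocks ≠ []} ≃ Composition (n + 1) where
  toFun := fun s => match s with
    | Sum.inl c => cons1 c
    | Sum.inr ⟨c, h⟩ => inc c h
  invFun := fun c =>
    if h1 : c.blocks.head (blocks_ne_nil c) = 1 then Sum.inl (tl c h1)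
    else Sum.inr ⟨dec c h1, by simp [dec]⟩
  left_inv := by
    rintro (c | ⟨c, h⟩)
    · have h1 : (cons1 c).blocks.head (blocks_ne_nil _) = 1 := rfl
      simp only [dif_pos h1]
      exact congrArg Sum.inl (Composition.ext rfl)
    · have key : (inc c h).blocks.head (blocks_ne_nil _) = c.blocks.head h + 1 := rfl
      have hp := c.blocks_pos (List.head_mem h)
      have h1 : ¬ (inc c h).blocks.head (blocks_ne_nil _) = 1 := by omega
      simp only [dif_neg h1]
      refine congrArg Sum.inr (Subtype.ext (Composition.ext ?_))
      show ((inc c h).blocks.head _ - 1) :: (inc c h).blocks.tail = c.blocks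
      have ht : (inc c h).blocks.tail = c.blocks.tail := rfl
      rw [key, ht, Nat.add_sub_cancel, List.cons_head_tail]
  right_inv := by
    intro c
    obtain ⟨b, t, hbt⟩ := List.exists_cons_of_ne_nil (blocks_ne_nil c)
    by_cases h1 : c.blocks.head (blocks_ne_nil c) = 1
    · simp only [dif_pos h1]
      refine Composition.ext ?_
      show 1 :: c.blocks.tail = c.blocks
      simp only [hbt, List.head_cons, List.tail_cons] at h1 ⊢
      rw [h1]
    · simp only [dif_neg h1]
      refine Composition.ext ?_
      show ((dec c h1).blocks.head _ + 1) :: (dec c h1).blocks.tail = c.blocks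
      have hp := c.blocks_pos (List.head_mem (blocks_ne_nil c))
      have key : (dec c h1).blocks.head (by simp [dec]) =
          c.blocks.head (blocks_ne_nil c) - 1 := rfl
      have ht : (dec c h1).blocks.tail = c.blocks.tail := rfl
      rw [key, ht, Nat.sub_add_cancel hp, List.cons_head_tail]

lemma splitSum {n : ℕ} (F : Composition (n + 1) → R) :
    ∑ c : Composition (n + 1), F c
      = ∑ c : Composition n, F (cons1 c)
        + ∑ c : {c : Composition n // c.blocks ≠ []}, F (inc c.1 c.2) := by
  rw [← Equiv.sum_comp (compEquiv n) F, Fintype.sum_sum_type]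
  rfl


lemma Sc_blocks_nil {n : ℕ} (v : List ℕ) (c : Composition n) (h : c.blocks = []) :
    Sc v c = [] := by
  simp [Sc, List.splitWrtComposition, h, List.splitWrtCompositionAux]

lemma Sc_ne_nil {n : ℕ} (v : List ℕ) (c : Composition n) (h : c.blocks ≠ []) :
    Sc v c ≠ [] := by
  have hl : (Sc v c).length = c.blocks.length := by
    simp [Sc, List.splitWrtComposition, List.length_splitWrtCompositionAux]
  intro hnil
  rw [hnil] at hl
  exact h (List.eq_nil_of_length_eq_zero hl.symm)

lemma Sc_cons1 {n : ℕ} (k : ℕ) (v : List ℕ) (c : Composition n) :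
    Sc (k :: v) (cons1 c) = k :: Sc v c := by
  have hb : (cons1 c).blocks = 1 :: c.blocks := rfl
  simp [Sc, List.splitWrtComposition, hb, List.splitWrtCompositionAux_cons]

lemma Sc_inc {n : ℕ} (k : ℕ) (v : List ℕ) (c : Composition n) (h : c.blocks ≠ []) :
    Sc (k :: v) (inc c h) = (k + (Sc v c).headI) :: (Sc v c).tail := by
  obtain ⟨b, t, hbt⟩ := List.exists_cons_of_ne_nil h
  have hb : (inc c h).blocks = (b + 1) :: t := by
    show (c.blocks.head h + 1) :: c.blocks.tail = _
    simp [hbt]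
  simp [Sc, List.splitWrtComposition, hb, hbt, List.splitWrtCompositionAux_cons]

lemma Qh_shift (x : Fin N → R) (i : Fin N) (k : ℕ) (s : List ℕ) (h : s ≠ []) :
    Qh x i ((k + s.headI) :: s.tail) = x i ^ k * Qh x i s := by
  cases s with
  | nil => exact absurd rfl h
  | cons s0 rest => simp [Qh, pow_add, mul_assoc]

lemma Qf_shift (x : Fin N → R) (a : Option (Fin N)) (k : ℕ) (s : List ℕ) (h : s ≠ []) :
    Qf x a ((k + s.headI) :: s.tail)
      = ∑ i ∈ Finset.univ.filter (fun i : Fin N => some i ≠ a), x i ^ k * Qh x i s := by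
  cases s with
  | nil => exact absurd rfl h
  | cons s0 rest =>
      simp only [List.headI, List.tail_cons, Qf, Qh]
      exact Finset.sum_congr rfl fun i _ => by rw [pow_add, mul_assoc]

lemma Mf_subtype (x : Fin N → R) (i : Fin N) (n : ℕ) (v : List ℕ) :
    Mf x i n v = ∑ c : {c : Composition n // c.blocks ≠ []}, Qh x i (Sc v c.1) := by
  classical
  have h0 : ∀ c ∈ Finset.univ.filter (fun c : Composition n => ¬ c.blocks ≠ []),
      Qh x i (Sc v c) = 0 := by
    intro c hc
    have : c.blocks = [] := by simpa using (Finset.mem_filter.1 hc).2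
    rw [Sc_blocks_nil _ _ this]
    rfl
  rw [Mf, ← Finset.sum_filter_add_sum_filter_not Finset.univ
    (fun c : Composition n => c.blocks ≠ []) (fun c => Qh x i (Sc v c)),
    Finset.sum_eq_zero h0, add_zero, ← Finset.sum_subtype_eq_sum_filter,
    Finset.subtype_univ]

lemma Mrec (x : Fin N → R) (i : Fin N) (n : ℕ) (k : ℕ) (v : List ℕ) :
    Mf x i (n + 1) (k :: v) = x i ^ k * (Vf x (some i) n v + Mf x i n v) := by
  rw [Mf, splitSum (fun c => Qh x i (Sc (k :: v) c))]
  have h1 : ∀ c : Composition n, Qh x i (Sc (k :: v) (cons1 c))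
      = x i ^ k * Qf x (some i) (Sc v c) := fun c => by rw [Sc_cons1]; rfl
  have h2 : ∀ c : {c : Composition n // c.blocks ≠ []},
      Qh x i (Sc (k :: v) (inc c.1 c.2)) = x i ^ k * Qh x i (Sc v c.1) := fun c => by
    rw [Sc_inc _ _ _ c.2, Qh_shift _ _ _ _ (Sc_ne_nil v c.1 c.2)]
  rw [Finset.sum_congr rfl fun c _ => h1 c, Finset.sum_congr rfl fun c _ => h2 c,
    ← Finset.mul_sum, ← Finset.mul_sum, ← Mf_subtype, Vf, mul_add]

lemma Vrec (x : Fin N → R) (a : Option (Fin N)) (n : ℕ) (k : ℕ) (v : List ℕ) :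
    Vf x a (n + 1) (k :: v)
      = ∑ i ∈ Finset.univ.filter (fun i : Fin N => some i ≠ a),
          x i ^ k * (Vf x (some i) n v + Mf x i n v) := by
  rw [Vf, splitSum (fun c => Qf x a (Sc (k :: v) c))]
  have h1 : ∀ c : Composition n, Qf x a (Sc (k :: v) (cons1 c))
      = ∑ i ∈ Finset.univ.filter (fun i : Fin N => some i ≠ a),
          x i ^ k * Qf x (some i) (Sc v c) := fun c => by rw [Sc_cons1]; rfl
  have h2 : ∀ c : {c : Composition n // c.blocks ≠ []},
      Qf x a (Sc (k :: v) (inc c.1 c.2))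
        = ∑ i ∈ Finset.univ.filter (fun i : Fin N => some i ≠ a),
            x i ^ k * Qh x i (Sc v c.1) := fun c => by
    rw [Sc_inc _ _ _ c.2, Qf_shift _ _ _ _ (Sc_ne_nil v c.1 c.2)]
  rw [Finset.sum_congr rfl fun c _ => h1 c, Finset.sum_congr rfl fun c _ => h2 c,
    Finset.sum_comm, Finset.sum_comm (t := Finset.univ.filter _)]
  rw [← Finset.sum_add_distrib]
  refine Finset.sum_congr rfl fun i _ => ?_
  rw [← Finset.mul_sum, ← Finset.mul_sum, ← Mf_subtype, Vf, mul_add]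

lemma comp_zero_blocks (c : Composition 0) : c.blocks = [] := by
  cases hc : c.blocks with
  | nil => rfl
  | cons b t =>
      have hs := c.blocks_sum
      have hp := c.blocks_pos (by rw [hc]; exact List.mem_cons_self)
      rw [hc] at hs
      simp at hs
      omega

instance : Unique (Composition 0) where
  default := ⟨[], by intro i hi; simp at hi, rfl⟩
  uniq c := Composition.ext (comp_zero_blocks c)

lemma Vf_zero (x : Fin N → R) (a : Option (Fin N)) (v : List ℕ) : Vf x a 0 v = 1 := by
  rw [Vf, Fintype.sum_unique, Sc_blocks_nil _ _ (comp_zero_blocks _)]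
  rfl

lemma Mf_zero (x : Fin N → R) (i : Fin N) (v : List ℕ) : Mf x i 0 v = 0 := by
  rw [Mf, Fintype.sum_unique, Sc_blocks_nil _ _ (comp_zero_blocks _)]
  rfl

/-- The left-hand side: product of power sums. -/
def Tf (x : Fin N → R) (v : List ℕ) : R := (v.map (pSum x)).prod

lemma KT (x : Fin N → R) : ∀ (v : List ℕ) (i : Fin N),
    Vf x (some i) v.length v + Mf x i v.length v = Tf x v := by
  intro v
  induction v with
  | nil =>
      intro i
      show Vf x (some i) 0 [] + Mf x i 0 [] = Tf x []
      rw [Vf_zero, Mf_zero]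
      simp [Tf]
  | cons k v ih =>
      intro i
      rw [show (k :: v).length = v.length + 1 from rfl, Vrec, Mrec,
        Finset.sum_congr rfl fun j _ => by rw [ih j], ih i]
      have hf : Finset.univ.filter (fun j : Fin N => some j ≠ some i)
          = Finset.univ.erase i := by
        ext j
        simp [Ne, eq_comm]
      rw [hf, Finset.sum_erase_add _ _ (Finset.mem_univ i)]
      conv_rhs => rw [Tf, List.map_cons, List.prod_cons]
      rw [pSum, Finset.sum_mul]
      rfl

lemma T_eq_V (x : Fin N → R) (k : ℕ) (v : List ℕ) :
    Tf x (k :: v) = Vf x none (v.length + 1) (k :: v) := by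
  rw [Vrec, Finset.filter_true_of_mem (fun i _ => Option.some_ne_none i),
    Finset.sum_congr rfl fun j _ => by rw [KT x v j]]
  conv_lhs => rw [Tf, List.map_cons, List.prod_cons]
  rw [pSum, Finset.sum_mul]
  rfl


lemma Qf_cons (x : Fin N → R) (a : Option (Fin N)) (k : ℕ) (v : List ℕ) :
    Qf x a (k :: v) = ∑ i ∈ Finset.univ.filter (fun i : Fin N => some i ≠ a),
      x i ^ k * Qf x (some i) v := rfl

/-- `PPoly` strengthened with a forbidden value for the first index. -/
def PPa (x : Fin N → R) (a : Option (Fin N)) {s : ℕ} (v : Fin s → ℕ) : R :=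
  ∑ i ∈ Finset.univ.filter (fun i : Fin s → Fin N =>
      (∀ j k : Fin s, (k : ℕ) = (j : ℕ) + 1 → i j ≠ i k) ∧
        ∀ j : Fin s, (j : ℕ) = 0 → some (i j) ≠ a),
    (List.ofFn fun j : Fin s => x (i j) ^ v j).prod

lemma PPoly_eq_PPa (x : Fin N → R) {s : ℕ} (v : Fin s → ℕ) :
    PPoly x v = PPa x none v := by
  rw [PPoly, PPa]
  refine Finset.sum_congr (Finset.filter_congr fun i _ => ?_) fun _ _ => rfl
  simp

lemma cond_iff {s : ℕ} (a : Option (Fin N)) (i0 : Fin N) (it : Fin s → Fin N) :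
    ((∀ j k : Fin (s + 1), (k : ℕ) = (j : ℕ) + 1 → Fin.cons (α := fun _ => Fin N) i0 it j ≠ Fin.cons (α := fun _ => Fin N) i0 it k) ∧
      (∀ j : Fin (s + 1), (j : ℕ) = 0 → some (Fin.cons (α := fun _ => Fin N) i0 it j) ≠ a))
    ↔ (some i0 ≠ a ∧ ((∀ j k : Fin s, (k : ℕ) = (j : ℕ) + 1 → it j ≠ it k) ∧
        (∀ j : Fin s, (j : ℕ) = 0 → some (it j) ≠ some i0))) := by
  constructor
  · rintro ⟨hA, hB⟩
    refine ⟨by simpa using hB 0 (by simp), ?_, ?_⟩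
    · intro j k hk
      have := hA j.succ k.succ (by simp [hk])
      simpa using this
    · intro j hj
      have := hA 0 j.succ (by simp [hj])
      simp only [Fin.cons_zero, Fin.cons_succ] at this
      exact fun hc => this (Option.some_injective _ hc).symm
  · rintro ⟨h0, hA, hB⟩
    constructor
    · intro j k hk
      rcases Fin.eq_zero_or_eq_succ k with rfl | ⟨k', rfl⟩
      · simp only [Fin.val_zero] at hk
        omega
      rcases Fin.eq_zero_or_eq_succ j with rfl | ⟨j', rfl⟩
      · have hk0 : (k' : ℕ) = 0 := by simpa using hk
        simp only [Fin.cons_zero, Fin.cons_succ]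
        intro hc
        exact hB k' hk0 (by rw [hc])
      · have hk' : (k' : ℕ) = (j' : ℕ) + 1 := by
          simpa using hk
        simp only [Fin.cons_succ]
        exact hA j' k' hk'
    · intro j hj
      have : j = 0 := Fin.ext (by simpa using hj)
      rw [this]
      simpa using h0

lemma PPa_eq_Qf (x : Fin N → R) : ∀ {s : ℕ} (v : Fin s → ℕ) (a : Option (Fin N)),
    PPa x a v = Qf x a (List.ofFn v) := by
  intro s
  induction s with
  | zero =>
      intro v a
      rw [PPa, Finset.filter_true_of_mem (fun i _ => ⟨fun j => j.elim0, fun j => j.elim0⟩)]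
      simp [Qf]
  | succ s ih =>
      intro v a
      rw [List.ofFn_succ, Qf_cons]
      have step : ∀ i : Fin N, Qf x (some i) (List.ofFn fun j : Fin s => v j.succ)
          = PPa x (some i) (fun j => v j.succ) := fun i => (ih _ _).symm
      rw [Finset.sum_congr rfl fun i _ => by rw [step i]]
      rw [PPa, Finset.sum_filter]
      rw [← Equiv.sum_comp (Fin.consEquiv (fun _ : Fin (s + 1) => Fin N))]
      rw [Fintype.sum_prod_type]
      rw [Finset.sum_filter]
      refine Finset.sum_congr rfl fun i0 _ => ?_
      have happ : ∀ it : Fin s → Fin N,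
          (Fin.consEquiv (fun _ : Fin (s + 1) => Fin N)) (i0, it) = Fin.cons (α := fun _ => Fin N) i0 it :=
        fun it => rfl
      have hprod : ∀ it : Fin s → Fin N,
          (List.ofFn fun j : Fin (s + 1) => x (Fin.cons (α := fun _ => Fin N) i0 it j) ^ v j).prod
            = x i0 ^ v 0 * (List.ofFn fun j : Fin s => x (it j) ^ v j.succ).prod := by
        intro it
        rw [List.ofFn_succ, List.prod_cons]
        simp
      calc ∑ it : Fin s → Fin N,
            (if (∀ j k : Fin (s + 1), (k : ℕ) = (j : ℕ) + 1 →
                  Fin.cons (α := fun _ => Fin N) i0 it j ≠ Fin.cons (α := fun _ => Fin N) i0 it k) ∧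
                (∀ j : Fin (s + 1), (j : ℕ) = 0 → some (Fin.cons (α := fun _ => Fin N) i0 it j) ≠ a) then
              (List.ofFn fun j : Fin (s + 1) => x (Fin.cons (α := fun _ => Fin N) i0 it j) ^ v j).prod else 0)
          = ∑ it : Fin s → Fin N,
            (if some i0 ≠ a then
              (if ((∀ j k : Fin s, (k : ℕ) = (j : ℕ) + 1 → it j ≠ it k) ∧
                  (∀ j : Fin s, (j : ℕ) = 0 → some (it j) ≠ some i0)) then
                x i0 ^ v 0 * (List.ofFn fun j : Fin s => x (it j) ^ v j.succ).prod else 0)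
              else 0) := by
            refine Finset.sum_congr rfl fun it _ => ?_
            rw [if_congr (cond_iff a i0 it) (hprod it) rfl, ite_and]
        _ = if some i0 ≠ a then
              x i0 ^ v 0 * PPa x (some i0) (fun j => v j.succ) else 0 := by
            by_cases h : some i0 ≠ a
            · simp only [if_pos h]
              rw [PPa, Finset.sum_filter, Finset.mul_sum]
              refine Finset.sum_congr rfl fun it _ => ?_
              rw [mul_ite, mul_zero]
            · simp [if_neg h]
        _ = _ := rfl
  

lemma ofFn_blockSum {r : ℕ} (u : Fin r → ℕ) (c : Composition r) :
    List.ofFn (blockSum u c) = Sc (List.ofFn u) c := by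
  have hlen : (Sc (List.ofFn u) c).length = c.length := by
    rw [Sc, List.length_map, List.length_splitWrtComposition]
  apply List.ext_getElem
  · rw [List.length_ofFn, hlen]
  · intro j h1 h2
    have hj : j < c.length := by rwa [List.length_ofFn] at h1
    rw [List.getElem_ofFn]
    simp only [Sc]
    rw [List.getElem_map, List.getElem_splitWrtComposition]
    have hsu : c.sizeUpTo (j + 1) = c.sizeUpTo j + c.blocksFun ⟨j, hj⟩ := c.sizeUpTo_succ' ⟨j, hj⟩
    have hle := c.sizeUpTo_le (j + 1)
    have hblock : (((List.ofFn u).take (c.sizeUpTo (j + 1))).drop (c.sizeUpTo j))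
        = List.ofFn (fun t : Fin (c.blocksFun ⟨j, hj⟩) => u (c.embedding ⟨j, hj⟩ t)) := by
      apply List.ext_getElem
      · simp only [List.length_drop, List.length_take, List.length_ofFn]
        omega
      · intro t ht1 ht2
        rw [List.getElem_drop, List.getElem_take, List.getElem_ofFn, List.getElem_ofFn]
        exact congrArg u (Fin.ext (by simp [c.coe_embedding]))
    rw [hblock, List.sum_ofFn]
    rfl

end Stmt5Aux

open Stmt5Aux in
/-- For a nonempty sequence `u = (u_1, …, u_r)` of positive integers, the ordered product
`p_{u_1} p_{u_2} ⋯ p_{u_r}` equals `∑_c P_{u·c}`, the sum over all compositions `c` of `r`. -/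
theorem stmt5 {R : Type*} [Ring R] {N : ℕ} (hN : 1 ≤ N) (x : Fin N → R)
    {r : ℕ} (hr : 0 < r) (u : Fin r → ℕ) (hu : ∀ j, 1 ≤ u j) :
    (List.ofFn fun j : Fin r => pSum x (u j)).prod
      = ∑ c : Composition r, PPoly x (blockSum u c) := by
  classical
  have key : ∀ c : Composition r, PPoly x (blockSum u c)
      = Qf x none (Sc (List.ofFn u) c) := fun c => by
    rw [PPoly_eq_PPa, PPa_eq_Qf, ofFn_blockSum]
  rw [Finset.sum_congr rfl fun c _ => key c]
  have hT : (List.ofFn fun j : Fin r => pSum x (u j)).prod = Tf x (List.ofFn u) := by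
    rw [Tf, List.map_ofFn]
    rfl
  rw [hT]
  have hlen : (List.ofFn u).length = r := List.length_ofFn
  have hne : List.ofFn u ≠ [] := by
    intro h
    rw [h] at hlen
    simp at hlen
    omega
  obtain ⟨k, v, hkv⟩ := List.exists_cons_of_ne_nil hne
  rw [hkv]
  have hvr : v.length + 1 = r := by
    rw [← hlen, hkv]
    rfl
  subst hvr
  exact T_eq_V x k v
end
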